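/- Let A be a semisimple Hopf algebra with commutative character ring and L a left normal coideal subalgebra. A character χ ∈ C(A) belongs to C(A//L) (i.e. is a character of an A//L-module) if and only if χ F_j = χ(1) F_j for all j ∈ J_L, where λ_L = Σ_{j∈J_L} F_j is the decomposition of the idempotent integral of (A//L)* into primitive idempotents of C(A). -/

import Mathlib

open scoped TensorProduct
open Coalgebra

noncomputable section
namespace Burciu

variable (k : Type*) [Field k] (A : Type*) [Ring A] [HopfAlgebra k A]

/-- The left adjoint action, `adL (a ⊗ l) = a₁ * l * S(a₂)`. -/
def adL : A ⊗[k] A →ₗ[k] A :=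
  (LinearMap.mul' k A) ∘ₗ
  (LinearMap.lTensor A (LinearMap.mul' k A)) ∘ₗ
  (LinearMap.lTensor A (LinearMap.lTensor A (HopfAlgebra.antipode (R := k)))) ∘ₗ
  (LinearMap.lTensor A (TensorProduct.comm k A A).toLinearMap) ∘ₗ
  (TensorProduct.assoc k A A A).toLinearMap ∘ₗ
  (LinearMap.rTensor A (Coalgebra.comul (R := k)))

/-- The right adjoint action, `adR (a ⊗ l) = S(a₁) * l * a₂`. -/
def adR : A ⊗[k] A →ₗ[k] A :=
  (LinearMap.mul' k A) ∘ₗ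
  (LinearMap.rTensor A (LinearMap.mul' k A)) ∘ₗ
  (TensorProduct.assoc k A A A).symm.toLinearMap ∘ₗ
  (LinearMap.rTensor (A ⊗[k] A) (HopfAlgebra.antipode (R := k))) ∘ₗ
  (LinearMap.lTensor A (TensorProduct.comm k A A).toLinearMap) ∘ₗ
  (TensorProduct.assoc k A A A).toLinearMap ∘ₗ
  (LinearMap.rTensor A (Coalgebra.comul (R := k)))

variable {k A} in
/-- `L` is a left coideal subalgebra: `Δ(L) ⊆ A ⊗ L`. -/
def IsLeftCoideal (L : Subalgebra k A) : Prop :=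
  ∀ l ∈ L, Coalgebra.comul (R := k) l ∈
    LinearMap.range (LinearMap.lTensor A (Subalgebra.toSubmodule L).subtype)

variable {k A} in
/-- `L` is a left normal coideal subalgebra: a left coideal subalgebra closed
under the left adjoint action `a · l = a₁ l S(a₂)`. -/
def IsLNCS (L : Subalgebra k A) : Prop :=
  IsLeftCoideal L ∧ ∀ a : A, ∀ l ∈ L, adL k A (a ⊗ₜ[k] l) ∈ L

variable {k A} in
/-- `L` is a Hopf subalgebra: a subalgebra with `Δ(L) ⊆ L ⊗ L` and `S(L) ⊆ L`. -/
def IsHopfSubalgebra (L : Subalgebra k A) : Prop :=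
  (∀ l ∈ L, Coalgebra.comul (R := k) l ∈
    LinearMap.range (TensorProduct.map (Subalgebra.toSubmodule L).subtype
      (Subalgebra.toSubmodule L).subtype)) ∧
  ∀ l ∈ L, HopfAlgebra.antipode (R := k) l ∈ L

variable {k A} in
/-- `L` is a normal Hopf subalgebra: a Hopf subalgebra stable under both
adjoint actions. -/
def IsNormalHopfSubalgebra (L : Subalgebra k A) : Prop :=
  IsHopfSubalgebra L ∧ (∀ a : A, ∀ l ∈ L, adL k A (a ⊗ₜ[k] l) ∈ L) ∧
    (∀ a : A, ∀ l ∈ L, adR k A (a ⊗ₜ[k] l) ∈ L)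

/-- The augmentation ideal `A L⁺`, where `L⁺ = L ∩ ker ε`. -/
def ALplus (L : Subalgebra k A) : Submodule k A :=
  (⊤ : Submodule k A) *
    (Subalgebra.toSubmodule L ⊓ LinearMap.ker (Coalgebra.counit (R := k) (A := A)))

/-- The right hit action `a ↼ f = f(a₁) a₂`, as a linear endomorphism of `A`. -/
def hit (f : Module.Dual k A) : A →ₗ[k] A :=
  (TensorProduct.lid k A).toLinearMap ∘ₗ (LinearMap.rTensor A f) ∘ₗ (Coalgebra.comul (R := k))

/-- Convolution product on the dual `A*`. -/
def conv (f g : Module.Dual k A) : Module.Dual k A :=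
  (LinearMap.mul' k k) ∘ₗ (TensorProduct.map f g) ∘ₗ (Coalgebra.comul (R := k))

variable {k A} in
/-- The cocommutative elements of `A*`; for a semisimple Hopf algebra these are
exactly the span of the irreducible characters, i.e. the character ring `C(A)`. -/
def IsCocom (f : Module.Dual k A) : Prop := ∀ a b : A, f (a * b) = f (b * a)

variable {k A} in
/-- The Hopf subalgebra `(A//N)* = {f ∈ A* | f(al) = ε(l) f(a) ∀ a ∈ A, l ∈ N} ⊆ A*`
attached to a subspace `N ⊆ A`. -/
def dualQuot (N : Submodule k A) : Set (Module.Dual k A) :=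
  {f | ∀ a : A, ∀ l ∈ N, f (a * l) = Coalgebra.counit (R := k) l * f a}

/-- The axioms for an R-matrix making `(A, R)` quasitriangular. -/
structure IsRMatrix (R : A ⊗[k] A) : Prop where
  isUnit : IsUnit R
  quasi : ∀ x : A, R * (Coalgebra.comul (R := k) x) =
    (TensorProduct.comm k A A (Coalgebra.comul (R := k) x)) * R
  comul_left : LinearMap.rTensor A (Coalgebra.comul (R := k)) R =
    (LinearMap.rTensor A ((TensorProduct.mk k A A).flip 1) R) *
      (LinearMap.rTensor A (TensorProduct.mk k A A 1) R)
  comul_right : LinearMap.lTensor A (Coalgebra.comul (R := k)) R =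
    (LinearMap.lTensor A (TensorProduct.mk k A A 1) R) *
      (LinearMap.lTensor A ((TensorProduct.mk k A A).flip 1) R)
  counit_left : (TensorProduct.lid k A) (LinearMap.rTensor A (Coalgebra.counit (R := k)) R) = 1
  counit_right : (TensorProduct.rid k A) (LinearMap.lTensor A (Coalgebra.counit (R := k)) R) = 1

/-- The monodromy matrix `Q = R₂₁ R`. -/
def Qmat (R : A ⊗[k] A) : A ⊗[k] A := (TensorProduct.comm k A A R) * R

/-- The Drinfeld map `φ_R(f) = (f ⊗ id)(R₂₁ R)`. -/
def phiR (R : A ⊗[k] A) (f : Module.Dual k A) : A :=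
  (TensorProduct.lid k A) (LinearMap.rTensor A f (Qmat k A R))

/-- The second Drinfeld map `_Rφ(f) = (id ⊗ f)(R₂₁ R)`. -/
def phiR' (R : A ⊗[k] A) (f : Module.Dual k A) : A :=
  (TensorProduct.rid k A) (LinearMap.lTensor A f (Qmat k A R))

variable {k A} in
/-- The monodromy `c_{W,V} ∘ c_{V,W}`, i.e. the action of `Q = R₂₁R`, is the
identity on `V ⊗ W`: the two representations centralize each other. -/
def QactsTrivially {V W : Type*} [AddCommGroup V] [Module k V] [AddCommGroup W] [Module k W]
    (R : A ⊗[k] A) (ρ : A →ₐ[k] Module.End k V) (σ : A →ₐ[k] Module.End k W) : Prop :=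
  (TensorProduct.homTensorHomMap (RingHom.id k) V W V W)
    (TensorProduct.map ρ.toLinearMap σ.toLinearMap (Qmat k A R)) = LinearMap.id

variable {k A} in
/-- A subset of `A` acts through the counit in a representation; for a left
normal coideal subalgebra `L` this says the module lies in `Rep(A//L)`. -/
def ActsTriviallyOn {V : Type*} [AddCommGroup V] [Module k V]
    (ρ : A →ₐ[k] Module.End k V) (L : Set A) : Prop :=
  ∀ l ∈ L, ρ l = (Coalgebra.counit (R := k) l) • (1 : Module.End k V)

variable {k A} in
/-- The character of a finite-dimensional representation. -/
def char {V : Type*} [AddCommGroup V] [Module k V]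
    (ρ : A →ₐ[k] Module.End k V) : Module.Dual k A :=
  (LinearMap.trace k V) ∘ₗ ρ.toLinearMap

end Burciu
end

open Burciu
open scoped TensorProduct

section BurciuAux

open TensorProduct LinearMap

variable {k : Type*} [Field k] {A : Type*} [Ring A] [HopfAlgebra k A]

namespace BurciuAux

/-- Contraction of the second tensor factor of `M ⊗ W` along a functional on `W`. -/
noncomputable def ctr (M W : Type*) [AddCommGroup M] [Module k M]
    [AddCommGroup W] [Module k W] (g : W →ₗ[k] k) : M ⊗[k] W →ₗ[k] M :=
  (TensorProduct.rid k M).toLinearMap ∘ₗ LinearMap.lTensor M g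

@[simp] lemma ctr_tmul (M W : Type*) [AddCommGroup M] [Module k M]
    [AddCommGroup W] [Module k W] (g : W →ₗ[k] k) (p : M) (q : W) :
    ctr M W g (p ⊗ₜ[k] q) = g q • p := by
  simp [ctr]

lemma ctr_comp_lTensor (M W W' : Type*) [AddCommGroup M] [Module k M]
    [AddCommGroup W] [Module k W] [AddCommGroup W'] [Module k W']
    (g : W' →ₗ[k] k) (φ : W →ₗ[k] W') :
    ctr M W' g ∘ₗ LinearMap.lTensor M φ = ctr M W (g ∘ₗ φ) := by
  unfold ctr
  rw [LinearMap.comp_assoc, ← LinearMap.lTensor_comp]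

/-- The operator `a ↦ a₁ g(a₂)`. -/
noncomputable def hitR (g : Module.Dual k A) : A →ₗ[k] A :=
  ctr A A g ∘ₗ (Coalgebra.comul (R := k) (A := A))

lemma hitR_apply (g : Module.Dual k A) (a : A) :
    hitR g a = ctr A A g (Coalgebra.comul (R := k) a) := rfl

lemma conv_eq_comp_hitR (f g : Module.Dual k A) :
    Burciu.conv k A f g = f ∘ₗ hitR g := by
  have h : (LinearMap.mul' k k) ∘ₗ (TensorProduct.map f g) = f ∘ₗ ctr A A g := by
    apply TensorProduct.ext'
    intro p q
    simp [ctr, LinearMap.mul'_apply, smul_eq_mul, mul_comm]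
  show (LinearMap.mul' k k) ∘ₗ ((TensorProduct.map f g) ∘ₗ (Coalgebra.comul (R := k))) = _
  rw [← LinearMap.comp_assoc, h, LinearMap.comp_assoc]
  rfl

lemma conv_apply (f g : Module.Dual k A) (a : A) :
    Burciu.conv k A f g a = f (hitR g a) := by
  rw [conv_eq_comp_hitR]; rfl

lemma conv_zero_right (f : Module.Dual k A) : Burciu.conv k A f 0 = 0 := by
  unfold Burciu.conv
  rw [TensorProduct.map_zero_right]
  simp

lemma conv_add_right (f g h : Module.Dual k A) :
    Burciu.conv k A f (g + h) = Burciu.conv k A f g + Burciu.conv k A f h := by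
  unfold Burciu.conv
  rw [TensorProduct.map_add_right, LinearMap.add_comp, LinearMap.comp_add]

lemma conv_sum_right {ι : Type*} (s : Finset ι) (f : Module.Dual k A)
    (g : ι → Module.Dual k A) :
    Burciu.conv k A f (∑ j ∈ s, g j) = ∑ j ∈ s, Burciu.conv k A f (g j) := by
  classical
  induction s using Finset.induction_on with
  | empty => simpa using conv_zero_right f
  | insert _ _ hx ih =>
      rw [Finset.sum_insert hx, Finset.sum_insert hx, conv_add_right, ih]

lemma conv_zero_left (g : Module.Dual k A) : Burciu.conv k A 0 g = 0 := by
  unfold Burciu.conv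
  rw [TensorProduct.map_zero_left]
  simp

lemma conv_add_left (f g h : Module.Dual k A) :
    Burciu.conv k A (f + g) h = Burciu.conv k A f h + Burciu.conv k A g h := by
  unfold Burciu.conv
  rw [TensorProduct.map_add_left, LinearMap.add_comp, LinearMap.comp_add]

lemma conv_sum_left {ι : Type*} (s : Finset ι) (g : ι → Module.Dual k A)
    (f : Module.Dual k A) :
    Burciu.conv k A (∑ j ∈ s, g j) f = ∑ j ∈ s, Burciu.conv k A (g j) f := by
  classical
  induction s using Finset.induction_on with
  | empty => simpa using conv_zero_left f
  | insert _ _ hx ih =>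
      rw [Finset.sum_insert hx, Finset.sum_insert hx, conv_add_left, ih]

lemma conv_smul_left (c : k) (f g : Module.Dual k A) :
    Burciu.conv k A (c • f) g = c • Burciu.conv k A f g := by
  unfold Burciu.conv
  rw [TensorProduct.map_smul_left, LinearMap.smul_comp, LinearMap.comp_smul]

lemma comul_comp_ctr (g : Module.Dual k A) :
    (Coalgebra.comul (R := k) (A := A)) ∘ₗ ctr A A g =
      ctr (A ⊗[k] A) A g ∘ₗ (Coalgebra.comul (R := k) (A := A)).rTensor A := by
  apply TensorProduct.ext'
  intro p q
  simp [ctr, LinearMap.rTensor_tmul, map_smul]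

lemma hitR_comp_hitR (g h : Module.Dual k A) :
    hitR g ∘ₗ hitR h = hitR (Burciu.conv k A g h) := by
  have h2 : (Coalgebra.comul (R := k) (A := A)).rTensor A
      ∘ₗ (Coalgebra.comul (R := k) (A := A)) =
      (TensorProduct.assoc k A A A).symm.toLinearMap ∘ₗ
        ((Coalgebra.comul (R := k) (A := A)).lTensor A
          ∘ₗ (Coalgebra.comul (R := k) (A := A))) :=
    (Coalgebra.coassoc_symm (R := k) (A := A)).symm
  have h3 : (ctr A A g ∘ₗ ctr (A ⊗[k] A) A h) ∘ₗ
      (TensorProduct.assoc k A A A).symm.toLinearMap =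
      ctr A (A ⊗[k] A) (LinearMap.mul' k k ∘ₗ TensorProduct.map g h) := by
    apply TensorProduct.ext'
    intro p w
    induction w using TensorProduct.induction_on with
    | zero => rw [TensorProduct.tmul_zero, map_zero, map_zero]
    | tmul q r =>
        simp only [LinearMap.comp_apply, LinearEquiv.coe_coe, LinearEquiv.coe_toLinearMap,
          TensorProduct.assoc_symm_tmul, ctr_tmul, map_smul, TensorProduct.map_tmul,
          LinearMap.mul'_apply]
        rw [smul_smul, mul_comm]
    | add x y hx hy =>
        rw [TensorProduct.tmul_add, map_add, map_add, hx, hy]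
  calc hitR g ∘ₗ hitR h
      = ctr A A g ∘ₗ (((Coalgebra.comul (R := k) (A := A)) ∘ₗ ctr A A h) ∘ₗ
          (Coalgebra.comul (R := k) (A := A))) := by
        unfold hitR; simp only [LinearMap.comp_assoc]
    _ = ctr A A g ∘ₗ ((ctr (A ⊗[k] A) A h ∘ₗ (Coalgebra.comul (R := k) (A := A)).rTensor A) ∘ₗ
          (Coalgebra.comul (R := k) (A := A))) := by rw [comul_comp_ctr]
    _ = (ctr A A g ∘ₗ ctr (A ⊗[k] A) A h) ∘ₗ
          ((Coalgebra.comul (R := k) (A := A)).rTensor A ∘ₗ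
            (Coalgebra.comul (R := k) (A := A))) := by simp only [LinearMap.comp_assoc]
    _ = (ctr A A g ∘ₗ ctr (A ⊗[k] A) A h) ∘ₗ
          ((TensorProduct.assoc k A A A).symm.toLinearMap ∘ₗ
            ((Coalgebra.comul (R := k) (A := A)).lTensor A
              ∘ₗ (Coalgebra.comul (R := k) (A := A)))) := by rw [h2]
    _ = (((ctr A A g ∘ₗ ctr (A ⊗[k] A) A h) ∘ₗ
          (TensorProduct.assoc k A A A).symm.toLinearMap) ∘ₗ
            (Coalgebra.comul (R := k) (A := A)).lTensor A) ∘ₗ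
              (Coalgebra.comul (R := k) (A := A)) := by simp only [LinearMap.comp_assoc]
    _ = (ctr A (A ⊗[k] A) (LinearMap.mul' k k ∘ₗ TensorProduct.map g h) ∘ₗ
          (Coalgebra.comul (R := k) (A := A)).lTensor A) ∘ₗ
            (Coalgebra.comul (R := k) (A := A)) := by rw [h3]
    _ = ctr A A ((LinearMap.mul' k k ∘ₗ TensorProduct.map g h) ∘ₗ
          (Coalgebra.comul (R := k) (A := A))) ∘ₗ
            (Coalgebra.comul (R := k) (A := A)) := by
        rw [ctr_comp_lTensor]
    _ = hitR (Burciu.conv k A g h) := by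
        unfold hitR Burciu.conv
        simp only [LinearMap.comp_assoc]

lemma conv_assoc (f g h : Module.Dual k A) :
    Burciu.conv k A (Burciu.conv k A f g) h = Burciu.conv k A f (Burciu.conv k A g h) := by
  rw [conv_eq_comp_hitR f g, conv_eq_comp_hitR g h, conv_eq_comp_hitR, conv_eq_comp_hitR,
    LinearMap.comp_assoc, hitR_comp_hitR, conv_eq_comp_hitR]

lemma ctr_counit_comul (a : A) :
    ctr A A (Coalgebra.counit (R := k)) (Coalgebra.comul (R := k) a) = a := by
  unfold ctr
  rw [LinearMap.comp_apply]
  rw [show (LinearMap.lTensor A (Coalgebra.counit (R := k))) (Coalgebra.comul (R := k) a)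
      = a ⊗ₜ[k] (1 : k) from Coalgebra.lTensor_counit_comul a]
  simp

variable (L : Subalgebra k A)

lemma ctr_mul_lTensor_right (ϕ : Module.Dual k A)
    (hϕ : ∀ (q : A), ∀ m ∈ Subalgebra.toSubmodule L,
      ϕ (q * m) = Coalgebra.counit (R := k) m * ϕ q)
    (z : A ⊗[k] A) (t : A ⊗[k] (Subalgebra.toSubmodule L)) :
    ctr A A ϕ (z * (LinearMap.lTensor A (Subalgebra.toSubmodule L).subtype t)) =
      ctr A A ϕ z * ctr A A (Coalgebra.counit (R := k))
        (LinearMap.lTensor A (Subalgebra.toSubmodule L).subtype t) := by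
  induction t using TensorProduct.induction_on with
  | zero => simp
  | tmul u m =>
      induction z using TensorProduct.induction_on with
      | zero => simp
      | tmul p q =>
          simp only [LinearMap.lTensor_tmul, Submodule.subtype_apply,
            Algebra.TensorProduct.tmul_mul_tmul, ctr_tmul]
          rw [hϕ q m m.2, smul_mul_smul_comm, mul_comm]
      | add z1 z2 h1 h2 =>
          simp only [add_mul, map_add, h1, h2]
  | add t1 t2 h1 h2 =>
      simp only [map_add, mul_add, h1, h2]

lemma ctr_mul_lTensor_left (ϕ : Module.Dual k A)
    (hϕ : ∀ (q : A), ∀ m ∈ Subalgebra.toSubmodule L,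
      ϕ (q * m) = Coalgebra.counit (R := k) m * ϕ q)
    (hcocom : Burciu.IsCocom ϕ)
    (z : A ⊗[k] A) (t : A ⊗[k] (Subalgebra.toSubmodule L)) :
    ctr A A ϕ ((LinearMap.lTensor A (Subalgebra.toSubmodule L).subtype t) * z) =
      ctr A A (Coalgebra.counit (R := k))
        (LinearMap.lTensor A (Subalgebra.toSubmodule L).subtype t) * ctr A A ϕ z := by
  induction t using TensorProduct.induction_on with
  | zero => simp
  | tmul u m =>
      induction z using TensorProduct.induction_on with
      | zero => simp
      | tmul p q =>
          simp only [LinearMap.lTensor_tmul, Submodule.subtype_apply,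
            Algebra.TensorProduct.tmul_mul_tmul, ctr_tmul]
          rw [hcocom (m : A) q, hϕ q m m.2, smul_mul_smul_comm, mul_comm]
      | add z1 z2 h1 h2 =>
          simp only [mul_add, map_add, h1, h2]
  | add t1 t2 h1 h2 =>
      simp only [map_add, add_mul, h1, h2]

lemma hitR_mul_right (ϕ : Module.Dual k A)
    (hϕ : ∀ (q : A), ∀ m ∈ Subalgebra.toSubmodule L,
      ϕ (q * m) = Coalgebra.counit (R := k) m * ϕ q)
    (hco : Burciu.IsLeftCoideal L) (a m : A) (hm : m ∈ L) :
    hitR ϕ (a * m) = hitR ϕ a * m := by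
  obtain ⟨t, ht⟩ := hco m hm
  rw [hitR_apply, Bialgebra.comul_mul, ← ht, ctr_mul_lTensor_right L ϕ hϕ, ht,
    ctr_counit_comul]
  rfl

lemma hitR_mul_left (ϕ : Module.Dual k A)
    (hϕ : ∀ (q : A), ∀ m ∈ Subalgebra.toSubmodule L,
      ϕ (q * m) = Coalgebra.counit (R := k) m * ϕ q)
    (hcocom : Burciu.IsCocom ϕ)
    (hco : Burciu.IsLeftCoideal L) (m a : A) (hm : m ∈ L) :
    hitR ϕ (m * a) = m * hitR ϕ a := by
  obtain ⟨t, ht⟩ := hco m hm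
  rw [hitR_apply, Bialgebra.comul_mul, ← ht, ctr_mul_lTensor_left L ϕ hϕ hcocom, ht,
    ctr_counit_comul]
  rfl

end BurciuAux

end BurciuAux

/-- (Proposition 5.9) A character `χ` of a finite-dimensional
`A`-module lies in `C(A//L)` iff `χ F_j = χ(1) F_j` for all `j ∈ J_L`,
where `λ_L = Σ_{j ∈ J_L} F_j`. -/
theorem char_in_quot_iff_absorbs_idempotents
    {k : Type*} [Field k] [IsAlgClosed k] [CharZero k]
    {A : Type*} [Ring A] [HopfAlgebra k A] [FiniteDimensional k A] [IsSemisimpleRing A]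
    (hCAcomm : ∀ f g : Module.Dual k A, IsCocom f → IsCocom g → conv k A f g = conv k A g f)
    (n : ℕ) (F : Fin n → Module.Dual k A)
    (hFcocom : ∀ j, IsCocom (F j))
    (hFidem : ∀ j, conv k A (F j) (F j) = F j)
    (hForth : ∀ i j, i ≠ j → conv k A (F i) (F j) = 0)
    (hFsum : ∑ j, F j = Coalgebra.counit (R := k))
    (hFprim : ∀ j, ∀ f g : Module.Dual k A, IsCocom f → IsCocom g →
      conv k A f f = f → conv k A g g = g → conv k A f g = 0 → f + g = F j → f = 0 ∨ g = 0)
    (Λ : A) (hΛint : ∀ a : A, a * Λ = Coalgebra.counit (R := k) a • Λ)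
    (hΛ1 : Coalgebra.counit (R := k) Λ = 1)
    (L : Subalgebra k A) (hL : IsLNCS L) (J : Finset (Fin n))
    (lamL : Module.Dual k A) (hlam_mem : lamL ∈ dualQuot (Subalgebra.toSubmodule L))
    (hlam_int : ∀ f ∈ dualQuot (Subalgebra.toSubmodule L), conv k A f lamL = f 1 • lamL)
    (hlam1 : lamL 1 = 1) (hlam_decomp : lamL = ∑ j ∈ J, F j)
    {V : Type*} [AddCommGroup V] [Module k V] [FiniteDimensional k V]
    (ρ : A →ₐ[k] Module.End k V) :
    ActsTriviallyOn ρ (L : Set A) ↔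
      ∀ j ∈ J, conv k A (char ρ) (F j) = char ρ 1 • F j := by
  classical
  open BurciuAux in
  have char_apply : ∀ a : A, char ρ a = LinearMap.trace k V (ρ a) := fun a => rfl
  -- lamL as a pointwise `dualQuot` statement
  have hlamQ : ∀ (q : A), ∀ m ∈ Subalgebra.toSubmodule L,
      lamL (q * m) = Coalgebra.counit (R := k) m * lamL q := by
    intro q m hm
    exact hlam_mem q m hm
  constructor
  · -- forward direction
    intro hAct j hj
    have hχmem : char ρ ∈ dualQuot (Subalgebra.toSubmodule L) := by
      simp only [dualQuot, Set.mem_setOf_eq]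
      intro a l hl
      have hl' : l ∈ L := hl
      rw [char_apply, char_apply, map_mul, hAct l hl', mul_smul_comm, mul_one, map_smul,
        smul_eq_mul]
    have hint := hlam_int _ hχmem
    have hlF : conv k A lamL (F j) = F j := by
      rw [hlam_decomp, BurciuAux.conv_sum_left,
        Finset.sum_eq_single_of_mem j hj (fun i _ hne => hForth i j hne)]
      exact hFidem j
    calc conv k A (char ρ) (F j)
        = conv k A (char ρ) (conv k A lamL (F j)) := by rw [hlF]
      _ = conv k A (conv k A (char ρ) lamL) (F j) := (BurciuAux.conv_assoc _ _ _).symm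
      _ = conv k A (char ρ 1 • lamL) (F j) := by rw [hint]
      _ = char ρ 1 • conv k A lamL (F j) := BurciuAux.conv_smul_left _ _ _
      _ = char ρ 1 • F j := by rw [hlF]
  · -- backward direction
    intro hyp
    -- `lamL` is cocommutative
    have hcoc : IsCocom lamL := by
      intro a b
      rw [hlam_decomp]
      simp only [LinearMap.coe_sum, Finset.sum_apply]
      exact Finset.sum_congr rfl fun j _ => hFcocom j (a) (b)
    -- the key consequence of the hypothesis : χ ∘ hitR lamL = χ(1) · lamL
    have h1 : conv k A (char ρ) lamL = char ρ 1 • lamL := by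
      rw [hlam_decomp, BurciuAux.conv_sum_right,
        Finset.sum_congr rfl (fun j hj => hyp j hj), ← Finset.smul_sum]
    have hkey : ∀ a : A, char ρ (BurciuAux.hitR lamL a) = char ρ 1 * lamL a := by
      intro a
      have h2 := LinearMap.congr_fun h1 a
      rw [BurciuAux.conv_apply] at h2
      simpa [smul_eq_mul] using h2
    -- the augmentation ideal as a left ideal of `A`
    let I : Submodule A A :=
      { carrier := (ALplus k A L : Set A)
        add_mem' := fun ha hb => Submodule.add_mem _ ha hb
        zero_mem' := Submodule.zero_mem _
        smul_mem' := by
          intro a u hu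
          rw [smul_eq_mul]
          exact Submodule.mul_induction_on hu
            (fun b _ m hm => by
              rw [← mul_assoc]
              exact Submodule.mul_mem_mul Submodule.mem_top hm)
            (fun x y hx hy => by rw [mul_add]; exact Submodule.add_mem _ hx hy) }
    have hI : ∀ u : A, u ∈ I ↔ u ∈ ALplus k A L := fun u => Iff.rfl
    -- a Maschke idempotent generating the augmentation ideal
    obtain ⟨Cc, hCc⟩ := exists_isCompl I
    set π := I.linearProjOfIsCompl Cc hCc with hπ
    set f : A := (π 1 : A) with hf
    have hf_mem : f ∈ ALplus k A L := (π 1).2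
    have hproj : ∀ u ∈ ALplus k A L, u * f = u := by
      intro u hu
      have h1' : π u = ⟨u, hu⟩ := Submodule.linearProjOfIsCompl_apply_left hCc ⟨u, hu⟩
      have h2 : π (u • (1 : A)) = u • π 1 := map_smul π u 1
      rw [smul_eq_mul, mul_one, h1'] at h2
      have h3 := congrArg (Subtype.val) h2
      simp only [SetLike.val_smul, smul_eq_mul] at h3
      exact h3.symm
    -- lamL kills the augmentation ideal
    have hlam_kill : ∀ u ∈ ALplus k A L, lamL u = 0 := by
      intro u hu
      refine Submodule.mul_induction_on hu ?_ ?_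
      · intro a _ m hm
        obtain ⟨hm1, hm2⟩ := Submodule.mem_inf.mp hm
        rw [hlamQ a m hm1, LinearMap.mem_ker.mp hm2, zero_mul]
      · intro x y hx hy; rw [map_add, hx, hy, add_zero]
    -- the element e
    set e : A := BurciuAux.hitR lamL ((1 : A) - f) with he
    have hR1 : BurciuAux.hitR lamL (1 : A) = 1 := by
      rw [BurciuAux.hitR_apply, Bialgebra.comul_one, Algebra.TensorProduct.one_def,
        BurciuAux.ctr_tmul, hlam1, one_smul]
    have he' : (1 : A) - e = BurciuAux.hitR lamL f := by
      rw [he, map_sub, hR1, sub_sub_cancel]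
    -- hitR lamL preserves the augmentation ideal
    have hRAL : ∀ u ∈ ALplus k A L, BurciuAux.hitR lamL u ∈ ALplus k A L := by
      intro u hu
      refine Submodule.mul_induction_on hu ?_ ?_
      · intro a _ m hm
        obtain ⟨hm1, hm2⟩ := Submodule.mem_inf.mp hm
        rw [BurciuAux.hitR_mul_right L lamL hlamQ hL.1 a m hm1]
        exact Submodule.mul_mem_mul Submodule.mem_top hm
      · intro x y hx hy
        rw [map_add]; exact Submodule.add_mem _ hx hy
    -- elements of L⁺ kill e
    have hme : ∀ m ∈ (Subalgebra.toSubmodule L ⊓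
        LinearMap.ker (Coalgebra.counit (R := k) (A := A))), m * e = 0 := by
      intro m hm
      obtain ⟨hm1, hm2⟩ := Submodule.mem_inf.mp hm
      have hmL : m ∈ L := hm1
      have hmAL : m ∈ ALplus k A L := by
        have := Submodule.mul_mem_mul (Submodule.mem_top (x := (1 : A))) hm
        rwa [one_mul] at this
      have h0 : m * ((1 : A) - f) = 0 := by
        rw [mul_sub, mul_one, hproj m hmAL, sub_self]
      rw [he, ← BurciuAux.hitR_mul_left L lamL hlamQ hcoc hL.1 m _ hmL, h0, map_zero]
    -- the whole augmentation ideal kills e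
    have hue : ∀ u ∈ ALplus k A L, u * e = 0 := by
      intro u hu
      refine Submodule.mul_induction_on hu ?_ ?_
      · intro a _ m hm
        rw [mul_assoc, hme m hm, mul_zero]
      · intro x y hx hy
        rw [add_mul, hx, hy, add_zero]
    -- e is idempotent
    have hee : e * e = e := by
      have h1' : (1 : A) - e ∈ ALplus k A L := by
        rw [he']; exact hRAL f hf_mem
      have h2 := hue _ h1'
      rw [sub_mul, one_mul, sub_eq_zero] at h2
      exact h2.symm
    -- e absorbs L via the counit
    have hle : ∀ l ∈ L, l * e = Coalgebra.counit (R := k) l • e := by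
      intro l hl
      have hmem : l - (Coalgebra.counit (R := k) l) • (1 : A) ∈
          (Subalgebra.toSubmodule L ⊓ LinearMap.ker (Coalgebra.counit (R := k) (A := A))) := by
        refine Submodule.mem_inf.mpr ⟨?_, ?_⟩
        · exact L.sub_mem hl (L.smul_mem L.one_mem _)
        · rw [LinearMap.mem_ker, map_sub, map_smul, Bialgebra.counit_one, smul_eq_mul,
            mul_one, sub_self]
      have h0 := hme _ hmem
      have h1' : l * e = (l - (Coalgebra.counit (R := k) l) • (1 : A)) * e +
          (Coalgebra.counit (R := k) l) • e := by
        rw [sub_mul, smul_mul_assoc, one_mul, sub_add_cancel]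
      rw [h1', h0, zero_add]
    -- trace of ρ e is the full dimension
    have hχe : char ρ e = char ρ 1 := by
      rw [he, hkey, map_sub, hlam1, hlam_kill f hf_mem, sub_zero, mul_one]
    -- ρ e is the identity
    have hPP : ρ e * ρ e = ρ e := by rw [← map_mul, hee]
    have hprojP : LinearMap.IsProj (LinearMap.range (ρ e)) (ρ e) := by
      refine ⟨fun x => LinearMap.mem_range_self _ x, ?_⟩
      rintro x ⟨y, rfl⟩
      calc ρ e ((ρ e) y) = (ρ e * ρ e) y := rfl
        _ = ρ e y := by rw [hPP]
    have htr : LinearMap.trace k V (ρ e) =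
        (Module.finrank k (LinearMap.range (ρ e)) : k) := hprojP.trace
    have htr2 : LinearMap.trace k V (ρ e) = (Module.finrank k V : k) := by
      rw [← char_apply, hχe, char_apply, map_one, LinearMap.trace_one]
    have hrank : Module.finrank k (LinearMap.range (ρ e)) = Module.finrank k V := by
      have := htr.symm.trans htr2
      exact_mod_cast this
    have hrange : LinearMap.range (ρ e) = ⊤ := Submodule.eq_top_of_finrank_eq hrank
    have hPid : ρ e = 1 := by
      apply LinearMap.ext
      intro v
      obtain ⟨u, hu⟩ := LinearMap.range_eq_top.mp hrange v
      rw [Module.End.one_apply, ← hu]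
      calc ρ e ((ρ e) u) = (ρ e * ρ e) u := rfl
        _ = ρ e u := by rw [hPP]
    -- conclude
    intro l hl
    have hl' : l ∈ L := hl
    calc ρ l = ρ l * ρ e := by rw [hPid, mul_one]
      _ = ρ (l * e) := (map_mul ρ l e).symm
      _ = ρ ((Coalgebra.counit (R := k) l) • e) := by rw [hle l hl']
      _ = (Coalgebra.counit (R := k) l) • ρ e := map_smul ρ _ _
      _ = (Coalgebra.counit (R := k) l) • (1 : Module.End k V) := by rw [hPid]
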